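/- Let H₁, …, Hₙ be finite-dimensional complex Hilbert spaces and let ϱ be a density operator on H₁ ⊗ ⋯ ⊗ Hₙ. Then ϱ is separable (with respect to H₁, …, Hₙ) if and only if ‖ϱ‖_γ⁽ⁿ⁾ = 1. -/

import Mathlib

open Matrix
open scoped Kronecker ComplexOrder

noncomputable def traceNorm {n : Type*} [Fintype n] [DecidableEq n] (A : Matrix n n ℂ) : ℝ :=
  (Matrix.trace (((Matrix.posSemidef_conjTranspose_mul_self A).1.eigenvectorUnitary : Matrix n n ℂ) *
    diagonal (((↑) : ℝ → ℂ) ∘ (√·) ∘ (Matrix.posSemidef_conjTranspose_mul_self A).1.eigenvalues) *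
      (star (Matrix.posSemidef_conjTranspose_mul_self A).1.eigenvectorUnitary : Matrix n n ℂ))).re

noncomputable def gammaNorm {m n : Type*} [Fintype m] [DecidableEq m] [Fintype n] [DecidableEq n]
    (t : Matrix (m × n) (m × n) ℂ) : ℝ :=
  sInf { c : ℝ | ∃ (r : ℕ) (u : Fin r → Matrix m m ℂ) (v : Fin r → Matrix n n ℂ),
    t = ∑ i, (u i) ⊗ₖ (v i) ∧ c = ∑ i, traceNorm (u i) * traceNorm (v i) }

def IsDensity {n : Type*} [Fintype n] (ρ : Matrix n n ℂ) : Prop :=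
  ρ.PosSemidef ∧ ρ.trace = 1

def evec {ι : Type*} (ψ : EuclideanSpace ℂ ι) : ι → ℂ := ψ

noncomputable def tensorVec {ι κ : Type*} (a : EuclideanSpace ℂ ι) (b : EuclideanSpace ℂ κ) :
    EuclideanSpace ℂ (ι × κ) :=
  (WithLp.equiv 2 _).symm (fun p => evec a p.1 * evec b p.2)

noncomputable def projOnto {ι : Type*} (ψ : EuclideanSpace ℂ ι) : Matrix ι ι ℂ :=
  Matrix.vecMulVec (evec ψ) (star (evec ψ))

/-- The elementary tensor (Kronecker product) of an n-tuple of matrices. -/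
noncomputable def bigTensor {N : ℕ} {m : Fin N → Type*} [∀ k, Fintype (m k)]
    (u : ∀ k, Matrix (m k) (m k) ℂ) : Matrix (∀ k, m k) (∀ k, m k) ℂ :=
  Matrix.of fun x y => ∏ k, u k (x k) (y k)

/-- The n-fold greatest cross norm on operators on \`H₁ ⊗ ⋯ ⊗ Hₙ\`. -/
noncomputable def gammaNormN {N : ℕ} {m : Fin N → Type*}
    [∀ k, Fintype (m k)] [∀ k, DecidableEq (m k)]
    (t : Matrix (∀ k, m k) (∀ k, m k) ℂ) : ℝ :=
  sInf { c : ℝ | ∃ (r : ℕ) (u : Fin r → ∀ k, Matrix (m k) (m k) ℂ),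
    t = ∑ i, bigTensor (u i) ∧ c = ∑ i, ∏ k, traceNorm (u i k) }

/-- Separability of a density operator on an n-fold tensor product: a finite convex
combination of elementary tensors of density operators. -/
def IsSeparableN {N : ℕ} {m : Fin N → Type*} [∀ k, Fintype (m k)]
    (ϱ : Matrix (∀ k, m k) (∀ k, m k) ℂ) : Prop :=
  ∃ (r : ℕ) (ω : Fin r → ℝ) (ρ : Fin r → ∀ k, Matrix (m k) (m k) ℂ),
    (∀ i, 0 < ω i) ∧ (∑ i, ω i = 1) ∧
    (∀ i k, IsDensity (ρ i k)) ∧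
    ϱ = ∑ i, (ω i : ℂ) • bigTensor (ρ i)

namespace Matrix.PosSemidef

variable {n : Type*} [Fintype n] [DecidableEq n]

/-- The square root of a positive semidefinite matrix via its spectral decomposition. -/
noncomputable def sqrt {A : Matrix n n ℂ} (hA : A.PosSemidef) : Matrix n n ℂ :=
  (hA.1.eigenvectorUnitary : Matrix n n ℂ) *
    diagonal (((↑) : ℝ → ℂ) ∘ (√·) ∘ hA.1.eigenvalues) * (star hA.1.eigenvectorUnitary : Matrix n n ℂ)

open scoped MatrixOrder in
lemma sqrt_eq_cfc {A : Matrix n n ℂ} (hA : A.PosSemidef) : hA.sqrt = CFC.sqrt A := by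
  rw [CFC.sqrt_eq_cfc, cfc_nnreal_eq_real _ A hA.nonneg, hA.1.cfc_eq]
  simp only [IsHermitian.cfc, Real.coe_sqrt, Real.coe_toNNReal', Unitary.conjStarAlgAut_apply]
  unfold sqrt
  congr 3
  funext i
  simp only [Function.comp_apply, max_eq_left (hA.eigenvalues_nonneg i)]
  rfl

open scoped MatrixOrder in
lemma posSemidef_sqrt {A : Matrix n n ℂ} (hA : A.PosSemidef) : hA.sqrt.PosSemidef := by
  rw [sqrt_eq_cfc]
  exact (CFC.sqrt_nonneg A).posSemidef

open scoped MatrixOrder in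
lemma sqrt_mul_self {A : Matrix n n ℂ} (hA : A.PosSemidef) : hA.sqrt * hA.sqrt = A := by
  rw [sqrt_eq_cfc]
  exact CFC.sqrt_mul_sqrt_self A hA.nonneg

open scoped MatrixOrder in
lemma eq_sqrt_of_sq_eq {A : Matrix n n ℂ} (hA : A.PosSemidef) {B : Matrix n n ℂ}
    (hB : B.PosSemidef) (hAB : A ^ 2 = B) : A = hB.sqrt := by
  subst hAB
  rw [sqrt_eq_cfc, sq, CFC.sqrt_mul_self A hA.nonneg]

end Matrix.PosSemidef

lemma traceNorm_def' {n : Type*} [Fintype n] [DecidableEq n] (A : Matrix n n ℂ) :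
    traceNorm A = (Matrix.posSemidef_conjTranspose_mul_self A).sqrt.trace.re := rfl

section AuxHull
open Set

lemma aux_isCompact_convexHull {V : Type*} [NormedAddCommGroup V] [NormedSpace ℝ V]
    [FiniteDimensional ℝ V] {s : Set V} (hs : IsCompact s) :
    IsCompact (convexHull ℝ s) := by
  rcases s.eq_empty_or_nonempty with rfl | ⟨p₀, hp₀⟩
  · simpa [convexHull_empty] using isCompact_empty
  · set d := Module.finrank ℝ V + 1 with hd
    set Φ : (Fin d → ℝ) × (Fin d → V) → V := fun q => ∑ i, q.1 i • q.2 i with hΦdef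
    have hΦ : Continuous Φ := by
      apply continuous_finset_sum
      intro i _
      exact ((continuous_apply i).comp continuous_fst).smul
        ((continuous_apply i).comp continuous_snd)
    set A : Set (Fin d → ℝ) := {w | (∀ i, 0 ≤ w i) ∧ ∑ i, w i = 1} with hAdef
    have hAclosed : IsClosed A := by
      have h1 : IsClosed {w : Fin d → ℝ | ∀ i, 0 ≤ w i} := by
        have : {w : Fin d → ℝ | ∀ i, 0 ≤ w i} = ⋂ i, {w | 0 ≤ w i} := by
          ext w; simp
        rw [this]
        exact isClosed_iInter fun i => isClosed_le continuous_const (continuous_apply i)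
      have h2 : IsClosed {w : Fin d → ℝ | ∑ i, w i = 1} :=
        isClosed_eq (by exact continuous_finset_sum _ fun i _ => continuous_apply i)
          continuous_const
      exact (h1.inter h2)
    have hA : IsCompact A := by
      refine (isCompact_univ_pi fun _ : Fin d => isCompact_Icc (a := (0:ℝ)) (b := 1)).of_isClosed_subset
        hAclosed ?_
      rintro w ⟨hw0, hw1⟩ i -
      refine ⟨hw0 i, ?_⟩
      calc w i ≤ ∑ j, w j := Finset.single_le_sum (fun j _ => hw0 j) (Finset.mem_univ i)
      _ = 1 := hw1
    have hB : IsCompact (Set.pi Set.univ (fun _ : Fin d => s)) := isCompact_univ_pi fun _ => hs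
    have key : convexHull ℝ s = Φ '' (A ×ˢ Set.pi Set.univ fun _ => s) := by
      apply Set.Subset.antisymm
      · intro x hx
        rw [convexHull_eq_union] at hx
        simp only [mem_iUnion] at hx
        obtain ⟨t, hts, hai, hx⟩ := hx
        have hcard : t.card ≤ d := by
          have h1 := hai.card_le_finrank_succ
          have h2 : Module.finrank ℝ ↥(vectorSpan ℝ (Set.range (Subtype.val : t → V)))
              ≤ Module.finrank ℝ V := Submodule.finrank_le _
          simpa [hd, Fintype.card_coe] using h1.trans (Nat.add_le_add_right h2 1)
        rw [Finset.convexHull_eq] at hx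
        obtain ⟨w, hw0, hw1, hwx⟩ := hx
        rw [t.centerMass_eq_of_sum_1 _ hw1] at hwx
        let e : {x // x ∈ t} ↪ Fin d := t.equivFin.toEmbedding.trans (Fin.castLEEmb hcard)
        let w' : Fin d → ℝ := Function.extend e (fun y => w y) 0
        let z' : Fin d → V := Function.extend e (fun y => (y : V)) (fun _ => p₀)
        have hrange : ∀ i : Fin d, i ∉ Finset.univ.map e → w' i = 0 := by
          intro i hi
          have : ¬ ∃ y, e y = i := by
            simp only [Finset.mem_map, Finset.mem_univ, true_and] at hi
            exact hi
          simp [w', Function.extend_apply' _ _ _ this]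
        have hw'e : ∀ y, w' (e y) = w y := fun y => e.injective.extend_apply _ _ _
        have hz'e : ∀ y : {x // x ∈ t}, z' (e y) = (y : V) := fun y =>
          e.injective.extend_apply _ _ _
        refine ⟨⟨w', z'⟩, ⟨⟨?_, ?_⟩, ?_⟩, ?_⟩
        · intro i
          show 0 ≤ w' i
          by_cases h : ∃ y, e y = i
          · obtain ⟨y, rfl⟩ := h; rw [hw'e]; exact hw0 _ y.2
          · simp [w', Function.extend_apply' _ _ _ h]
        · rw [← Finset.sum_subset (Finset.subset_univ (Finset.univ.map e))
            (fun i _ hi => hrange i hi)]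
          rw [Finset.sum_map]
          simp only [hw'e]
          rw [← hw1]
          exact Finset.sum_attach t w
        · rw [Set.mem_univ_pi]
          intro i
          show z' i ∈ s
          by_cases h : ∃ y, e y = i
          · obtain ⟨y, rfl⟩ := h; rw [hz'e]; exact hts y.2
          · simpa [z', Function.extend_apply' _ _ _ h] using hp₀
        · show ∑ i, w' i • z' i = x
          rw [← Finset.sum_subset (Finset.subset_univ (Finset.univ.map e))
            (fun i _ hi => by rw [hrange i hi, zero_smul])]
          rw [Finset.sum_map]
          simp only [hw'e, hz'e]
          rw [← hwx]
          exact Finset.sum_attach t (fun y => w y • id y)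
      · rintro - ⟨⟨w, z⟩, ⟨⟨hw0, hw1⟩, hz⟩, rfl⟩
        exact mem_convexHull_of_exists_fintype w z hw0 hw1
          (fun i => hz i (Set.mem_univ i)) rfl
    rw [key]
    exact (hA.prod hB).image hΦ

end AuxHull

section TraceNorm

variable {n : Type*} [Fintype n] [DecidableEq n]

lemma trace_sqrt_eq {A : Matrix n n ℂ} (hA : A.PosSemidef) :
    hA.sqrt.trace = ((∑ i, Real.sqrt (hA.1.eigenvalues i) : ℝ) : ℂ) := by
  rw [Matrix.PosSemidef.sqrt, Matrix.trace_mul_comm, ← Matrix.mul_assoc,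
    Matrix.mem_unitaryGroup_iff'.mp hA.1.eigenvectorUnitary.2, Matrix.one_mul,
    Matrix.trace_diagonal]
  push_cast
  rfl

lemma traceNorm_eq_sum_sqrt (A : Matrix n n ℂ) :
    traceNorm A = ∑ i, Real.sqrt ((Matrix.posSemidef_conjTranspose_mul_self A).1.eigenvalues i) := by
  rw [traceNorm_def', trace_sqrt_eq, Complex.ofReal_re]

lemma traceNorm_nonneg (A : Matrix n n ℂ) : 0 ≤ traceNorm A := by
  rw [traceNorm_eq_sum_sqrt]
  exact Finset.sum_nonneg fun i _ => Real.sqrt_nonneg _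

lemma traceNorm_of_posSemidef {A : Matrix n n ℂ} (hA : A.PosSemidef) :
    traceNorm A = A.trace.re := by
  have h : A = (Matrix.posSemidef_conjTranspose_mul_self A).sqrt :=
    hA.eq_sqrt_of_sq_eq (Matrix.posSemidef_conjTranspose_mul_self A) (by rw [pow_two, hA.1.eq])
  rw [traceNorm_def', ← h]

lemma posSemidef_real_smul {A : Matrix n n ℂ} (hA : A.PosSemidef) {c : ℝ} (hc : 0 ≤ c) :
    ((c : ℂ) • A).PosSemidef := by
  exact hA.smul (by exact_mod_cast hc)

lemma traceNorm_real_smul (A : Matrix n n ℂ) {c : ℝ} (hc : 0 ≤ c) :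
    traceNorm ((c : ℂ) • A) = c * traceNorm A := by
  have hS := (Matrix.posSemidef_conjTranspose_mul_self A).posSemidef_sqrt
  have h : ((c : ℂ) • (Matrix.posSemidef_conjTranspose_mul_self A).sqrt) =
      (Matrix.posSemidef_conjTranspose_mul_self ((c : ℂ) • A)).sqrt := by
    refine (posSemidef_real_smul hS hc).eq_sqrt_of_sq_eq _ ?_
    rw [Matrix.conjTranspose_smul, Matrix.smul_mul, Matrix.mul_smul]
    rw [pow_two, Matrix.smul_mul, Matrix.mul_smul, Matrix.PosSemidef.sqrt_mul_self]
    rw [smul_smul, smul_smul]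
    congr 1
    simp [Complex.star_def, Complex.conj_ofReal, mul_comm]
  rw [traceNorm_def', ← h, Matrix.trace_smul, smul_eq_mul, Complex.mul_re, Complex.ofReal_re,
    Complex.ofReal_im, traceNorm_def']
  ring

/-- Singular value decomposition as sum of rank-one terms. -/
lemma svd_decomp (A : Matrix n n ℂ) :
    ∃ (σ : n → ℝ) (u v : n → EuclideanSpace ℂ n),
      (∀ j, 0 ≤ σ j) ∧ (∑ j, σ j = traceNorm A) ∧ (∀ j, ‖u j‖ ≤ 1) ∧ (∀ j, ‖v j‖ ≤ 1) ∧
      ∀ x y, A x y = ∑ j, (σ j : ℂ) * (evec (u j) x * star (evec (v j) y)) := by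
  classical
  set hH := Matrix.posSemidef_conjTranspose_mul_self A with hHdef
  set hE := hH.1 with hEdef
  set lam := hE.eigenvalues with hlam
  have hlam0 : ∀ j, 0 ≤ lam j := fun j => hH.eigenvalues_nonneg j
  set σ : n → ℝ := fun j => Real.sqrt (lam j) with hσ
  set v : n → EuclideanSpace ℂ n := fun j => hE.eigenvectorBasis j with hv
  set w : n → (n → ℂ) := fun j => A *ᵥ (WithLp.equiv 2 _) (v j) with hw
  have hAv_normsq : ∀ j, star (w j) ⬝ᵥ (w j) = (lam j : ℂ) := by
    intro j
    rw [hw]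
    simp only
    rw [Matrix.star_mulVec, ← Matrix.dotProduct_mulVec, Matrix.mulVec_mulVec,
      (show (Aᴴ * A) *ᵥ (WithLp.equiv 2 (n → ℂ)) (v j) = lam j • (WithLp.equiv 2 (n → ℂ)) (v j) from
        hE.mulVec_eigenvectorBasis j), dotProduct_smul]
    have : star ((WithLp.equiv 2 _) (v j)) ⬝ᵥ ((WithLp.equiv 2 _) (v j)) = (1 : ℂ) := by
      have h1 : (inner ℂ (v j) (v j) : ℂ) = ((‖v j‖ : ℂ)) ^ 2 := inner_self_eq_norm_sq_to_K (v j)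
      have h2 : ‖v j‖ = 1 := hE.eigenvectorBasis.orthonormal.1 j
      rw [h2] at h1
      rw [PiLp.inner_apply] at h1
      simp only [RCLike.inner_apply] at h1
      simpa [dotProduct, mul_comm] using h1
    rw [show (WithLp.equiv 2 ((i : n) → (fun x => ℂ) i)) (hE.eigenvectorBasis j)
        = (WithLp.equiv 2 (n → ℂ)) (v j) from rfl, this]
    simp [Complex.real_smul]
  have hAv_zero : ∀ j, σ j = 0 → w j = 0 := by
    intro j h0
    have hl : lam j = 0 := by
      rw [← Real.sq_sqrt (hlam0 j)]
      rw [hσ] at h0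
      simp only at h0
      rw [h0]
      ring
    apply dotProduct_star_self_eq_zero.mp
    rw [hAv_normsq j, hl]
    simp
  set u : n → EuclideanSpace ℂ n :=
    fun j => if h : σ j = 0 then 0 else (WithLp.equiv 2 _).symm ((σ j : ℂ)⁻¹ • w j) with hu
  have hwnorm : ∀ j, ‖(WithLp.equiv 2 (n → ℂ)).symm (w j)‖ = σ j := by
    intro j
    have h1 : (inner ℂ ((WithLp.equiv 2 (n → ℂ)).symm (w j)) ((WithLp.equiv 2 (n → ℂ)).symm (w j)) : ℂ)
        = ((‖(WithLp.equiv 2 (n → ℂ)).symm (w j)‖ : ℂ)) ^ 2 :=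
      inner_self_eq_norm_sq_to_K _
    rw [PiLp.inner_apply] at h1
    simp only [RCLike.inner_apply] at h1
    have h2 : star (w j) ⬝ᵥ (w j)
        = ((‖(WithLp.equiv 2 (n → ℂ)).symm (w j)‖ : ℂ)) ^ 2 := by
      rw [← h1, dotProduct]; exact Finset.sum_congr rfl fun x _ => mul_comm _ _
    rw [hAv_normsq j] at h2
    have h3 : lam j = ‖(WithLp.equiv 2 (n → ℂ)).symm (w j)‖ ^ 2 := by
      exact_mod_cast h2
    rw [hσ]
    simp only
    rw [h3, Real.sqrt_sq (norm_nonneg _)]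
  have hunorm : ∀ j, ‖u j‖ ≤ 1 := by
    intro j
    rw [hu]
    simp only
    by_cases h : σ j = 0
    · simp [h]
    · rw [dif_neg h]
      have : (WithLp.equiv 2 (n → ℂ)).symm ((σ j : ℂ)⁻¹ • w j)
          = (σ j : ℂ)⁻¹ • (WithLp.equiv 2 (n → ℂ)).symm (w j) := by
        rfl
      rw [this, norm_smul, hwnorm j]
      have hσpos : 0 < σ j := lt_of_le_of_ne (Real.sqrt_nonneg _) (Ne.symm h)
      have hσpos' : 0 < σ j := hσpos
      rw [norm_inv, Complex.norm_real, Real.norm_of_nonneg hσpos.le,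
        inv_mul_cancel₀ (ne_of_gt hσpos)]
  have hterm : ∀ j x, (σ j : ℂ) * evec (u j) x = w j x := by
    intro j x
    by_cases h : σ j = 0
    · rw [hAv_zero j h]
      rw [hu]
      simp only [dif_pos h]
      simp [evec, h]
    · rw [hu]
      simp only [dif_neg h]
      have : evec ((WithLp.equiv 2 (n → ℂ)).symm ((σ j : ℂ)⁻¹ • w j)) x
          = (σ j : ℂ)⁻¹ * w j x := rfl
      rw [this, ← mul_assoc, mul_inv_cancel₀ (by exact_mod_cast h), one_mul]
  have hcomp : ∀ x y, (∑ j, evec (v j) x * star (evec (v j) y)) = (1 : Matrix n n ℂ) x y := by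
    intro x y
    have hvU : ∀ j z, evec (v j) z = (hE.eigenvectorUnitary : Matrix n n ℂ) z j := by
      intro j z
      rw [Matrix.IsHermitian.eigenvectorUnitary_apply]
      rfl
    have hU := Matrix.mem_unitaryGroup_iff.mp hE.eigenvectorUnitary.2
    calc (∑ j, evec (v j) x * star (evec (v j) y))
        = ∑ j, (hE.eigenvectorUnitary : Matrix n n ℂ) x j
          * star ((hE.eigenvectorUnitary : Matrix n n ℂ)) j y := by
          apply Finset.sum_congr rfl
          intro j _
          rw [hvU, hvU, Matrix.star_apply]
      _ = ((hE.eigenvectorUnitary : Matrix n n ℂ)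
          * star (hE.eigenvectorUnitary : Matrix n n ℂ)) x y := (Matrix.mul_apply).symm
      _ = (1 : Matrix n n ℂ) x y := by rw [hU]
  refine ⟨σ, u, v, fun j => Real.sqrt_nonneg _, ?_, hunorm,
    fun j => by rw [hv]; simp [hE.eigenvectorBasis.orthonormal.1 j], ?_⟩
  · rw [traceNorm_eq_sum_sqrt]
  · intro x y
    have : ∀ j, (σ j : ℂ) * (evec (u j) x * star (evec (v j) y))
        = w j x * star (evec (v j) y) := by
      intro j
      rw [← mul_assoc, hterm]
    simp only [this]
    symm
    have hwx : ∀ j, w j x = ∑ z, A x z * evec (v j) z := by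
      intro j
      rw [hw]
      rfl
    calc ∑ j, w j x * star (evec (v j) y)
        = ∑ j, ∑ z, A x z * evec (v j) z * star (evec (v j) y) := by
          apply Finset.sum_congr rfl
          intro j _
          rw [hwx j, Finset.sum_mul]
      _ = ∑ z, A x z * ∑ j, evec (v j) z * star (evec (v j) y) := by
          rw [Finset.sum_comm]
          apply Finset.sum_congr rfl
          intro z _
          rw [Finset.mul_sum]
          apply Finset.sum_congr rfl
          intro j _
          ring
      _ = ∑ z, A x z * (1 : Matrix n n ℂ) z y := by
          apply Finset.sum_congr rfl
          intro z _
          rw [hcomp]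
      _ = A x y := by
          simp [Matrix.one_apply]

end TraceNorm

section P3
variable {n : Type*} [Fintype n] [DecidableEq n]

lemma inner_eq_sum_mul (a b : EuclideanSpace ℂ n) :
    (inner ℂ b a : ℂ) = ∑ x, evec a x * star (evec b x) := by
  rw [PiLp.inner_apply]
  apply Finset.sum_congr rfl
  intro x _
  rw [RCLike.inner_apply]
  rfl

lemma abs_sum_pair_le (a b : EuclideanSpace ℂ n) (ha : ‖a‖ ≤ 1) (hb : ‖b‖ ≤ 1) :
    ‖(∑ x, evec a x * star (evec b x))‖ ≤ 1 := by
  rw [← inner_eq_sum_mul]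
  calc ‖(inner ℂ b a : ℂ)‖ = ‖(inner ℂ b a : ℂ)‖ := rfl
    _ ≤ ‖b‖ * ‖a‖ := norm_inner_le_norm b a
    _ ≤ 1 := mul_le_one₀ hb (norm_nonneg _) ha

lemma abs_trace_le_traceNorm (A : Matrix n n ℂ) : ‖A.trace‖ ≤ traceNorm A := by
  obtain ⟨σ, u, v, hσ0, hσsum, hu, hv, hA⟩ := svd_decomp A
  have htr : A.trace = ∑ j, (σ j : ℂ) * (∑ x, evec (u j) x * star (evec (v j) x)) := by
    rw [Matrix.trace]
    calc ∑ x, A.diag x = ∑ x, ∑ j, (σ j : ℂ) * (evec (u j) x * star (evec (v j) x)) := by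
          apply Finset.sum_congr rfl
          intro x _
          exact hA x x
      _ = ∑ j, (σ j : ℂ) * (∑ x, evec (u j) x * star (evec (v j) x)) := by
          rw [Finset.sum_comm]
          apply Finset.sum_congr rfl
          intro j _
          rw [Finset.mul_sum]
  rw [htr, ← hσsum]
  calc ‖(∑ j, (σ j : ℂ) * (∑ x, evec (u j) x * star (evec (v j) x)))‖
      ≤ ∑ j, ‖((σ j : ℂ) * (∑ x, evec (u j) x * star (evec (v j) x)))‖ :=
        norm_sum_le _ _
    _ ≤ ∑ j, σ j := by
        apply Finset.sum_le_sum
        intro j _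
        rw [norm_mul, Complex.norm_real, Real.norm_of_nonneg (hσ0 j)]
        calc σ j * ‖(∑ x, evec (u j) x * star (evec (v j) x))‖
            ≤ σ j * 1 := by
              apply mul_le_mul_of_nonneg_left _ (hσ0 j)
              exact abs_sum_pair_le _ _ (hu j) (hv j)
          _ = σ j := mul_one _

lemma complex_eq_one_of_re_eq_one {z : ℂ} (h1 : z.re = 1) (h2 : ‖z‖ ≤ 1) : z = 1 := by
  have h3 : ‖z‖ ^ 2 ≤ 1 := by nlinarith [norm_nonneg z]
  rw [Complex.sq_norm, Complex.normSq_apply, h1] at h3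
  have him : z.im = 0 := by nlinarith
  exact Complex.ext (by simp [h1]) (by simp [him])

lemma prod_eq_one_forall {ι : Type*} [Fintype ι] [DecidableEq ι] (x : ι → ℝ) (h0 : ∀ k, 0 ≤ x k)
    (h1 : ∀ k, x k ≤ 1) (hp : ∏ k, x k = 1) : ∀ k, x k = 1 := by
  intro k
  refine le_antisymm (h1 k) ?_
  have he : x k * ∏ j ∈ Finset.univ.erase k, x j = 1 := by
    rw [Finset.mul_prod_erase Finset.univ x (Finset.mem_univ k), hp]
  have hle : ∏ j ∈ Finset.univ.erase k, x j ≤ 1 :=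
    Finset.prod_le_one (fun j _ => h0 j) (fun j _ => h1 j)
  have hge : 0 ≤ ∏ j ∈ Finset.univ.erase k, x j := Finset.prod_nonneg (fun j _ => h0 j)
  nlinarith [mul_le_mul_of_nonneg_left hle (h0 k)]
end P3

section Main
variable {N : ℕ} {m : Fin N → Type*} [∀ k, Fintype (m k)] [∀ k, DecidableEq (m k)]

lemma trace_bigTensor (u : ∀ k, Matrix (m k) (m k) ℂ) :
    (bigTensor u).trace = ∏ k, (u k).trace := by
  classical
  simp only [Matrix.trace, Matrix.diag, bigTensor, Matrix.of_apply]
  rw [Finset.prod_univ_sum (fun k => (Finset.univ : Finset (m k))) (fun k j => u k j j)]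
  rw [Fintype.piFinset_univ]

lemma one_le_cost (ϱ : Matrix (∀ k, m k) (∀ k, m k) ℂ) (htr : ϱ.trace = 1) {r : ℕ}
    (u : Fin r → ∀ k, Matrix (m k) (m k) ℂ) (hdec : ϱ = ∑ i, bigTensor (u i)) :
    (1 : ℝ) ≤ ∑ i, ∏ k, traceNorm (u i k) := by
  have h1 : (1 : ℝ) = ‖ϱ.trace‖ := by rw [htr]; simp
  rw [h1, hdec, Matrix.trace_sum]
  calc ‖(∑ i, (bigTensor (u i)).trace)‖
      ≤ ∑ i, ‖((bigTensor (u i)).trace)‖ := norm_sum_le _ _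
    _ ≤ ∑ i, ∏ k, traceNorm (u i k) := by
        apply Finset.sum_le_sum
        intro i _
        rw [trace_bigTensor, norm_prod]
        exact Finset.prod_le_prod (fun k _ => norm_nonneg _)
          (fun k _ => abs_trace_le_traceNorm _)

lemma gammaNormN_of_separable (ϱ : Matrix (∀ k, m k) (∀ k, m k) ℂ) (hϱ : IsDensity ϱ)
    (hsep : IsSeparableN ϱ) : gammaNormN ϱ = 1 := by
  classical
  obtain ⟨r, ω, ρ, hωpos, hωsum, hden, hϱeq⟩ := hsep
  have hmem : (1 : ℝ) ∈ { c : ℝ | ∃ (r : ℕ) (u : Fin r → ∀ k, Matrix (m k) (m k) ℂ),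
      ϱ = ∑ i, bigTensor (u i) ∧ c = ∑ i, ∏ k, traceNorm (u i k) } := by
    by_cases hN : N = 0
    · have hempty : IsEmpty (Fin N) := ⟨fun i => absurd i.2 (by omega)⟩
      refine ⟨1, fun _ k => 1, ?_, ?_⟩
      · ext x y
        rw [hϱeq]
        simp only [Matrix.sum_apply, Matrix.smul_apply, bigTensor, Matrix.of_apply]
        rw [@Finset.univ_eq_empty (Fin N) _ hempty]
        simp only [Finset.prod_empty, smul_eq_mul, mul_one]
        have hs : (∑ i : Fin r, (ω i : ℂ)) = 1 := by
          rw [← Complex.ofReal_sum, hωsum, Complex.ofReal_one]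
        rw [hs]
        simp
      · rw [@Finset.univ_eq_empty (Fin N) _ hempty]
        simp
    · set k₀ : Fin N := ⟨0, Nat.pos_of_ne_zero hN⟩
      set u : Fin r → ∀ k, Matrix (m k) (m k) ℂ :=
        fun i => Function.update (ρ i) k₀ ((ω i : ℂ) • ρ i k₀) with hu
      have hkey : ∀ i, bigTensor (u i) = (ω i : ℂ) • bigTensor (ρ i) := by
        intro i
        ext x y
        simp only [bigTensor, Matrix.of_apply, Matrix.smul_apply, smul_eq_mul]
        rw [← Finset.mul_prod_erase Finset.univ _ (Finset.mem_univ k₀),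
          ← Finset.mul_prod_erase Finset.univ (fun k => ρ i k (x k) (y k)) (Finset.mem_univ k₀)]
        have h1 : u i k₀ = (ω i : ℂ) • ρ i k₀ := Function.update_self _ _ _
        have h2 : ∀ k ∈ Finset.univ.erase k₀, u i k (x k) (y k) = ρ i k (x k) (y k) := by
          intro k hk
          rw [hu]
          simp only
          rw [Function.update_of_ne (Finset.ne_of_mem_erase hk)]
        rw [Finset.prod_congr rfl h2, h1]
        simp only [Matrix.smul_apply, smul_eq_mul]
        ring
      refine ⟨r, u, ?_, ?_⟩
      · rw [hϱeq]
        exact Finset.sum_congr rfl fun i _ => (hkey i).symm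
      · rw [← hωsum]
        apply Finset.sum_congr rfl
        intro i _
        rw [← Finset.mul_prod_erase Finset.univ _ (Finset.mem_univ k₀)]
        have h1 : traceNorm (u i k₀) = ω i := by
          have : u i k₀ = (ω i : ℂ) • ρ i k₀ := Function.update_self _ _ _
          rw [this, traceNorm_real_smul _ (hωpos i).le, traceNorm_of_posSemidef (hden i k₀).1,
            (hden i k₀).2]
          simp
        have h2 : ∀ k ∈ Finset.univ.erase k₀, traceNorm (u i k) = 1 := by
          intro k hk
          have : u i k = ρ i k := Function.update_of_ne (Finset.ne_of_mem_erase hk) _ _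
          rw [this, traceNorm_of_posSemidef (hden i k).1, (hden i k).2]
          simp
        rw [h1, Finset.prod_congr rfl h2]
        simp
  have hlow : ∀ c ∈ { c : ℝ | ∃ (r : ℕ) (u : Fin r → ∀ k, Matrix (m k) (m k) ℂ),
      ϱ = ∑ i, bigTensor (u i) ∧ c = ∑ i, ∏ k, traceNorm (u i k) }, (1:ℝ) ≤ c := by
    rintro c ⟨r, u, hdec, rfl⟩
    exact one_le_cost ϱ hϱ.2 u hdec
  refine le_antisymm (csInf_le ⟨1, hlow⟩ hmem) (le_csInf ⟨1, hmem⟩ hlow)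

end Main

section Hard
variable {N : ℕ} {m : Fin N → Type*} [∀ k, Fintype (m k)] [∀ k, DecidableEq (m k)]

attribute [local instance] Matrix.normedAddCommGroup Matrix.normedSpace

/-- rank-one elementary tensors with unit-ball vectors -/
def tSet (N : ℕ) (m : Fin N → Type*) [∀ k, Fintype (m k)] [∀ k, DecidableEq (m k)] :
    Set (Matrix (∀ k, m k) (∀ k, m k) ℂ) :=
  {M | ∃ a b : ∀ k, EuclideanSpace ℂ (m k), (∀ k, ‖a k‖ ≤ 1) ∧ (∀ k, ‖b k‖ ≤ 1) ∧
    M = bigTensor fun k => Matrix.vecMulVec (evec (a k)) (star (evec (b k)))}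

lemma smul_real_complex (r : ℝ) (M : Matrix (∀ k, m k) (∀ k, m k) ℂ) : r • M = (r : ℂ) • M := by
  ext x y
  simp [Matrix.smul_apply, Complex.real_smul]

lemma isCompact_tSet : IsCompact (tSet N m) := by
  classical
  set Φ : (∀ k, EuclideanSpace ℂ (m k)) × (∀ k, EuclideanSpace ℂ (m k)) →
      Matrix (∀ k, m k) (∀ k, m k) ℂ :=
    fun q => bigTensor fun k => Matrix.vecMulVec (evec (q.1 k)) (star (evec (q.2 k))) with hΦ
  have hcont : Continuous Φ := by
    apply continuous_matrix
    intro x y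
    have hrfl : (fun q => Φ q x y) = fun q : (∀ k, EuclideanSpace ℂ (m k)) × (∀ k, EuclideanSpace ℂ (m k)) =>
        ∏ k, (Matrix.vecMulVec (evec (q.1 k)) (star (evec (q.2 k)))) (x k) (y k) := rfl
    rw [hrfl]
    apply continuous_finset_prod
    intro k _
    simp only [Matrix.vecMulVec_apply, Pi.star_apply]
    apply Continuous.mul
    · exact (continuous_apply (x k)).comp
        (((PiLp.continuousLinearEquiv 2 ℂ (fun _ : m k => ℂ)).continuous).comp
          ((continuous_apply k).comp continuous_fst))
    · apply Continuous.star
      exact (continuous_apply (y k)).comp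
        (((PiLp.continuousLinearEquiv 2 ℂ (fun _ : m k => ℂ)).continuous).comp
          ((continuous_apply k).comp continuous_snd))
  have hset : tSet N m = Φ ''
      ((Set.univ.pi fun k => Metric.closedBall 0 1) ×ˢ (Set.univ.pi fun k => Metric.closedBall 0 1)) := by
    ext M
    constructor
    · rintro ⟨a, b, ha, hb, rfl⟩
      exact ⟨⟨a, b⟩, ⟨fun k _ => mem_closedBall_zero_iff.mpr (ha k),
        fun k _ => mem_closedBall_zero_iff.mpr (hb k)⟩, rfl⟩
    · rintro ⟨⟨a, b⟩, ⟨ha, hb⟩, rfl⟩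
      exact ⟨a, b, fun k => mem_closedBall_zero_iff.mp (ha k (Set.mem_univ k)),
        fun k => mem_closedBall_zero_iff.mp (hb k (Set.mem_univ k)), rfl⟩
  rw [hset]
  exact (((isCompact_univ_pi fun k => isCompact_closedBall 0 1).prod
    (isCompact_univ_pi fun k => isCompact_closedBall 0 1))).image hcont

lemma posSemidef_vecMulVec_star {n : Type*} [Fintype n] (f : n → ℂ) :
    (Matrix.vecMulVec f (star f)).PosSemidef := by
  exact Matrix.posSemidef_vecMulVec_self_star f

lemma isDensity_vecMulVec_star {n : Type*} [Fintype n] [DecidableEq n]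
    (a : EuclideanSpace ℂ n) (ha : ‖a‖ = 1) :
    IsDensity (Matrix.vecMulVec (evec a) (star (evec a))) := by
  refine ⟨posSemidef_vecMulVec_star _, ?_⟩
  have h1 : (Matrix.vecMulVec (evec a) (star (evec a))).trace
      = ∑ x, evec a x * star (evec a x) := by
    simp [Matrix.trace, Matrix.diag, Matrix.vecMulVec_apply]
  rw [h1, ← inner_eq_sum_mul, inner_self_eq_norm_sq_to_K, ha]
  simp

lemma bigTensor_expand (u : ∀ k, Matrix (m k) (m k) ℂ)
    (σ : ∀ k, m k → ℝ) (a b : ∀ k, m k → EuclideanSpace ℂ (m k))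
    (h : ∀ k x y, u k x y = ∑ j, (σ k j : ℂ) * (evec (a k j) x * star (evec (b k j) y))) :
    bigTensor u = ∑ p : ∀ k, m k, (∏ k, σ k (p k) : ℝ) •
      bigTensor (fun k => Matrix.vecMulVec (evec (a k (p k))) (star (evec (b k (p k))))) := by
  classical
  ext x y
  simp only [bigTensor, Matrix.of_apply, Matrix.sum_apply, Matrix.smul_apply,
    Matrix.vecMulVec_apply, Pi.star_apply]
  calc ∏ k, u k (x k) (y k)
      = ∏ k, ∑ j, (σ k j : ℂ) * (evec (a k j) (x k) * star (evec (b k j) (y k))) :=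
        Finset.prod_congr rfl fun k _ => h k (x k) (y k)
    _ = ∑ p ∈ Fintype.piFinset (fun k => (Finset.univ : Finset (m k))),
        ∏ k, (σ k (p k) : ℂ) * (evec (a k (p k)) (x k) * star (evec (b k (p k)) (y k))) :=
        Finset.prod_univ_sum _ _
    _ = ∑ p : ∀ k, m k, (∏ k, σ k (p k) : ℝ) •
        ∏ k, evec (a k (p k)) (x k) * star (evec (b k (p k)) (y k)) := by
        rw [Fintype.piFinset_univ]
        apply Finset.sum_congr rfl
        intro p _
        rw [Finset.prod_mul_distrib, Complex.real_smul, Complex.ofReal_prod]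

lemma inv_smul_mem_hull (ϱ : Matrix (∀ k, m k) (∀ k, m k) ℂ) {r : ℕ}
    (u : Fin r → ∀ k, Matrix (m k) (m k) ℂ) (hdec : ϱ = ∑ i, bigTensor (u i)) {c : ℝ}
    (hc : c = ∑ i, ∏ k, traceNorm (u i k)) (hc0 : 0 < c) :
    c⁻¹ • ϱ ∈ convexHull ℝ (tSet N m) := by
  classical
  have hsvd := fun i k => svd_decomp (u i k)
  choose σ a b hσ0 hσsum ha hb hrep using hsvd
  apply mem_convexHull_of_exists_fintype (ι := Fin r × (∀ k, m k))
    (w := fun q => c⁻¹ * ∏ k, σ q.1 k (q.2 k))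
    (z := fun q => bigTensor fun k =>
      Matrix.vecMulVec (evec (a q.1 k (q.2 k))) (star (evec (b q.1 k (q.2 k)))))
  · intro q
    exact mul_nonneg (inv_nonneg.mpr hc0.le) (Finset.prod_nonneg fun k _ => hσ0 q.1 k (q.2 k))
  · rw [← Finset.mul_sum]
    have hip : ∀ i : Fin r, ∑ p : ∀ k, m k, ∏ k, σ i k (p k) = ∏ k, traceNorm (u i k) := by
      intro i
      calc ∑ p : ∀ k, m k, ∏ k, σ i k (p k)
          = ∑ p ∈ Fintype.piFinset (fun k => (Finset.univ : Finset (m k))), ∏ k, σ i k (p k) := by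
            rw [Fintype.piFinset_univ]
        _ = ∏ k, ∑ j, σ i k j := (Finset.prod_univ_sum _ _).symm
        _ = ∏ k, traceNorm (u i k) := Finset.prod_congr rfl fun k _ => hσsum i k
    rw [Fintype.sum_prod_type]
    rw [Finset.sum_congr rfl (fun i _ => hip i), ← hc, inv_mul_cancel₀ (ne_of_gt hc0)]
  · intro q
    exact ⟨fun k => a q.1 k (q.2 k), fun k => b q.1 k (q.2 k),
      fun k => ha q.1 k (q.2 k), fun k => hb q.1 k (q.2 k), rfl⟩
  · calc ∑ q : Fin r × (∀ k, m k), (c⁻¹ * ∏ k, σ q.1 k (q.2 k)) •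
        bigTensor (fun k => Matrix.vecMulVec (evec (a q.1 k (q.2 k))) (star (evec (b q.1 k (q.2 k)))))
        = c⁻¹ • ∑ q : Fin r × (∀ k, m k), (∏ k, σ q.1 k (q.2 k) : ℝ) •
          bigTensor (fun k => Matrix.vecMulVec (evec (a q.1 k (q.2 k))) (star (evec (b q.1 k (q.2 k))))) := by
          rw [Finset.smul_sum]
          exact Finset.sum_congr rfl fun q _ => mul_smul _ _ _
      _ = c⁻¹ • ∑ i : Fin r, ∑ p : ∀ k, m k, (∏ k, σ i k (p k) : ℝ) •
          bigTensor (fun k => Matrix.vecMulVec (evec (a i k (p k))) (star (evec (b i k (p k))))) := by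
          rw [Fintype.sum_prod_type]
      _ = c⁻¹ • ∑ i : Fin r, bigTensor (u i) := by
          congr 1
          exact Finset.sum_congr rfl fun i _ => (bigTensor_expand (u i) (σ i) (a i) (b i) (hrep i)).symm
      _ = c⁻¹ • ϱ := by rw [hdec]

lemma separableN_of_gammaNormN (ϱ : Matrix (∀ k, m k) (∀ k, m k) ℂ) (hϱ : IsDensity ϱ)
    (hγ : gammaNormN ϱ = 1) : IsSeparableN ϱ := by
  classical
  set S : Set ℝ := { c : ℝ | ∃ (r : ℕ) (u : Fin r → ∀ k, Matrix (m k) (m k) ℂ),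
      ϱ = ∑ i, bigTensor (u i) ∧ c = ∑ i, ∏ k, traceNorm (u i k) } with hS
  have hEq : sInf S = 1 := hγ
  have hlow : ∀ c ∈ S, (1 : ℝ) ≤ c := by
    rintro c ⟨r, u, hdec, rfl⟩
    exact one_le_cost ϱ hϱ.2 u hdec
  have hne : S.Nonempty := by
    by_contra h
    rw [Set.not_nonempty_iff_eq_empty] at h
    rw [h, Real.sInf_empty] at hEq
    norm_num at hEq
  have hseq : ∀ ν : ℕ, ∃ c ∈ S, c < 1 + 1 / (ν + 1) := by
    intro ν
    apply exists_lt_of_csInf_lt hne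
    rw [hEq]
    have : (0 : ℝ) < 1 / (ν + 1) := by positivity
    linarith
  choose cs hcsS hcslt using hseq
  have hcs1 : ∀ ν, 1 ≤ cs ν := fun ν => hlow _ (hcsS ν)
  have hmem : ∀ ν, (cs ν)⁻¹ • ϱ ∈ convexHull ℝ (tSet N m) := by
    intro ν
    obtain ⟨r, u, hdec, hcost⟩ := hcsS ν
    exact inv_smul_mem_hull ϱ u hdec hcost (lt_of_lt_of_le zero_lt_one (hcs1 ν))
  have hK : IsCompact (convexHull ℝ (tSet N m)) := aux_isCompact_convexHull isCompact_tSet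
  have hcst : Filter.Tendsto cs Filter.atTop (nhds 1) := by
    have hup : Filter.Tendsto (fun ν : ℕ => 1 + 1 / ((ν : ℝ) + 1)) Filter.atTop (nhds 1) := by
      have h0 : Filter.Tendsto (fun ν : ℕ => 1 / ((ν : ℝ) + 1)) Filter.atTop (nhds 0) :=
        tendsto_one_div_add_atTop_nhds_zero_nat
      have := h0.const_add (1 : ℝ)
      simpa using this
    exact tendsto_of_tendsto_of_tendsto_of_le_of_le tendsto_const_nhds hup hcs1
      (fun ν => (hcslt ν).le)
  have htend : Filter.Tendsto (fun ν => (cs ν)⁻¹ • ϱ) Filter.atTop (nhds ϱ) := by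
    have h2 : Filter.Tendsto (fun ν => (cs ν)⁻¹) Filter.atTop (nhds 1) := by
      simpa using hcst.inv₀ one_ne_zero
    simpa using h2.smul_const ϱ
  have hϱK : ϱ ∈ convexHull ℝ (tSet N m) :=
    hK.isClosed.mem_of_tendsto htend (Filter.Eventually.of_forall hmem)
  rw [mem_convexHull_iff_exists_fintype] at hϱK
  obtain ⟨ι, hι, w, z, hw0, hw1, hzT, hsum⟩ := hϱK
  choose a b ha hb hz using hzT
  set ζ : ι → ℂ := fun i => ∏ k, (inner ℂ (b i k) (a i k) : ℂ) with hζ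
  have htrz : ∀ i, (z i).trace = ζ i := by
    intro i
    rw [hz i, trace_bigTensor]
    apply Finset.prod_congr rfl
    intro k _
    rw [inner_eq_sum_mul]
    simp [Matrix.trace, Matrix.diag, Matrix.vecMulVec_apply]
  have habsζ : ∀ i, ‖(ζ i)‖ ≤ 1 := by
    intro i
    rw [hζ]
    simp only
    rw [norm_prod]
    apply Finset.prod_le_one (fun k _ => norm_nonneg _)
    intro k _
    calc ‖(inner ℂ (b i k) (a i k) : ℂ)‖ = ‖(inner ℂ (b i k) (a i k) : ℂ)‖ := rfl
      _ ≤ ‖b i k‖ * ‖a i k‖ := norm_inner_le_norm _ _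
      _ ≤ 1 := mul_le_one₀ (hb i k) (norm_nonneg _) (ha i k)
  have hone : (1 : ℂ) = ∑ i, (w i : ℂ) * ζ i := by
    have h1 : ϱ.trace = 1 := hϱ.2
    rw [← hsum] at h1
    rw [Matrix.trace_sum] at h1
    rw [← h1]
    apply Finset.sum_congr rfl
    intro i _
    rw [show w i • z i = (w i : ℂ) • z i from smul_real_complex (w i) (z i)]
    rw [Matrix.trace_smul, smul_eq_mul, htrz i]
  have hre : ∀ i, ((w i : ℂ) * ζ i).re = w i * (ζ i).re := by
    intro i
    simp [Complex.mul_re]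
  have habs_norm : ∀ x : ℂ, ‖x‖ = ‖x‖ := fun _ => rfl
  have hkey : ∀ i, ((w i : ℂ) * ζ i).re = w i := by
    have hiff := Finset.sum_eq_sum_iff_of_le (s := Finset.univ)
      (f := fun i => ((w i : ℂ) * ζ i).re) (g := w) ?_
    · have hsums : ∑ i, ((w i : ℂ) * ζ i).re = ∑ i, w i := by
        rw [← Complex.re_sum, ← hone, hw1]
        simp
      intro i
      exact hiff.mp hsums i (Finset.mem_univ i)
    · intro i _
      show ((w i : ℂ) * ζ i).re ≤ w i
      rw [hre i]
      calc w i * (ζ i).re ≤ w i * 1 := by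
            apply mul_le_mul_of_nonneg_left _ (hw0 i)
            exact (Complex.re_le_norm _).trans (habsζ i)
        _ = w i := mul_one _
  have hζ1 : ∀ i, w i ≠ 0 → ζ i = 1 := by
    intro i hi
    have h1 : w i * (ζ i).re = w i := by rw [← hre i]; exact hkey i
    have h2 : (ζ i).re = 1 := by
      have h3 : w i * (ζ i).re = w i * 1 := by rw [mul_one]; exact h1
      exact mul_left_cancel₀ hi h3
    exact complex_eq_one_of_re_eq_one h2 (habsζ i)
  have hfac : ∀ i, w i ≠ 0 → ∀ k, ∃ rr : ℂ, rr ≠ 0 ∧ a i k = rr • b i k ∧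
      (inner ℂ (b i k) (a i k) : ℂ) = rr ∧ ‖a i k‖ = 1 := by
    intro i hi
    have habs1 : ∀ k, ‖(inner ℂ (b i k) (a i k) : ℂ)‖ = 1 := by
      apply prod_eq_one_forall _ (fun k => norm_nonneg _)
      · intro k
        calc ‖(inner ℂ (b i k) (a i k) : ℂ)‖ = ‖(inner ℂ (b i k) (a i k) : ℂ)‖ := rfl
          _ ≤ ‖b i k‖ * ‖a i k‖ := norm_inner_le_norm _ _
          _ ≤ 1 := mul_le_one₀ (hb i k) (norm_nonneg _) (ha i k)
      · rw [← norm_prod]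
        rw [show ∏ k, (inner ℂ (b i k) (a i k) : ℂ) = ζ i from rfl, hζ1 i hi]
        simp
    intro k
    have hna : ‖a i k‖ = 1 := by
      have h1 : (1 : ℝ) ≤ ‖b i k‖ * ‖a i k‖ := by
        rw [← habs1 k, habs_norm]
        exact norm_inner_le_norm _ _
      have h2 : ‖b i k‖ * ‖a i k‖ ≤ ‖a i k‖ := by
        calc ‖b i k‖ * ‖a i k‖ ≤ 1 * ‖a i k‖ :=
              mul_le_mul_of_nonneg_right (hb i k) (norm_nonneg _)
          _ = ‖a i k‖ := one_mul _
      exact le_antisymm (ha i k) (h1.trans h2)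
    have hnb : ‖b i k‖ = 1 := by
      have h1 : (1 : ℝ) ≤ ‖b i k‖ * ‖a i k‖ := by
        rw [← habs1 k, habs_norm]
        exact norm_inner_le_norm _ _
      have h2 : ‖b i k‖ * ‖a i k‖ ≤ ‖b i k‖ := by
        calc ‖b i k‖ * ‖a i k‖ ≤ ‖b i k‖ * 1 :=
              mul_le_mul_of_nonneg_left (ha i k) (norm_nonneg _)
          _ = ‖b i k‖ := mul_one _
      exact le_antisymm (hb i k) (h1.trans h2)
    have hb0 : b i k ≠ 0 := by
      intro h
      rw [h] at hnb
      simp at hnb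
    have ha0 : a i k ≠ 0 := by
      intro h
      rw [h] at hna
      simp at hna
    have heq : ‖(inner ℂ (b i k) (a i k) : ℂ)‖ = ‖b i k‖ * ‖a i k‖ := by
      rw [hnb, hna, mul_one, ← habs_norm, habs1 k]
    obtain ⟨rr, hrr0, hrr⟩ := (norm_inner_eq_norm_iff (𝕜 := ℂ) hb0 ha0).mp heq
    refine ⟨rr, hrr0, hrr, ?_, hna⟩
    rw [hrr, inner_smul_right, inner_self_eq_norm_sq_to_K, hnb]
    simp
  have hzden : ∀ i, w i ≠ 0 → z i =
      bigTensor (fun k => Matrix.vecMulVec (evec (a i k)) (star (evec (a i k)))) := by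
    intro i hi
    choose rr hrr0 harr hinner hna using hfac i hi
    have hprod : ∏ k, rr k = 1 := by
      rw [← hζ1 i hi]
      exact Finset.prod_congr rfl fun k _ => (hinner k).symm
    have hbeq : ∀ k t, evec (b i k) t = (rr k)⁻¹ * evec (a i k) t := by
      intro k t
      have h1 : evec (a i k) t = rr k * evec (b i k) t := by
        rw [harr k]
        rfl
      rw [h1, ← mul_assoc, inv_mul_cancel₀ (hrr0 k), one_mul]
    rw [hz i]
    ext x y
    simp only [bigTensor, Matrix.of_apply, Matrix.vecMulVec_apply, Pi.star_apply]
    calc ∏ k, evec (a i k) (x k) * star (evec (b i k) (y k))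
        = ∏ k, (star (rr k)⁻¹) * (evec (a i k) (x k) * star (evec (a i k) (y k))) := by
          apply Finset.prod_congr rfl
          intro k _
          rw [hbeq k (y k)]
          rw [star_mul']
          ring
      _ = (star (∏ k, (rr k)⁻¹)) * ∏ k, evec (a i k) (x k) * star (evec (a i k) (y k)) := by
          rw [Finset.prod_mul_distrib, ← star_prod]
      _ = ∏ k, evec (a i k) (x k) * star (evec (a i k) (y k)) := by
          rw [Finset.prod_inv_distrib, hprod]
          simp
  -- assemble
  set t' : Finset ι := Finset.univ.filter (fun i => w i ≠ 0) with ht'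
  have hϱ2 : ϱ = ∑ i ∈ t', (w i : ℂ) •
      bigTensor (fun k => Matrix.vecMulVec (evec (a i k)) (star (evec (a i k)))) := by
    rw [← hsum, ← Finset.sum_filter_of_ne (p := fun i => w i ≠ 0)
      (by intro i _ hne' heq; exact hne' (by rw [heq, zero_smul]))]
    apply Finset.sum_congr rfl
    intro i hi
    have hwne : w i ≠ 0 := (Finset.mem_filter.mp hi).2
    rw [smul_real_complex, hzden i hwne]
  have hw1' : ∑ i ∈ t', w i = 1 := by
    rw [← hw1]
    exact Finset.sum_filter_of_ne (by intro i _ h h0; exact h (by rw [h0]))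
  set r' : ℕ := t'.card with hr'
  set e : Fin r' ≃ {x // x ∈ t'} := t'.equivFin.symm with he
  refine ⟨r', fun j => w (e j), fun j => fun k =>
    Matrix.vecMulVec (evec (a (e j) k)) (star (evec (a (e j) k))), ?_, ?_, ?_, ?_⟩
  · intro j
    have hmem' : (e j : ι) ∈ Finset.univ.filter (fun i => w i ≠ 0) := (e j).2
    exact lt_of_le_of_ne (hw0 _) (Ne.symm (Finset.mem_filter.mp hmem').2)
  · rw [← hw1']
    rw [← Finset.sum_coe_sort t' w]
    exact Fintype.sum_equiv e _ _ (fun j => rfl)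
  · intro j k
    have hmem' : (e j : ι) ∈ Finset.univ.filter (fun i => w i ≠ 0) := (e j).2
    obtain ⟨rr, hrr0, harr, hinner, hna⟩ := hfac _ (Finset.mem_filter.mp hmem').2 k
    exact isDensity_vecMulVec_star _ hna
  · rw [hϱ2, ← Finset.sum_coe_sort t']
    exact (Fintype.sum_equiv e _ _ (fun j => rfl)).symm

end Hard


/-- A density operator on `H₁ ⊗ ⋯ ⊗ Hₙ` is separable iff its n-fold greatest cross
norm equals 1. -/
theorem separableN_iff_gammaNormN_eq_one {N : ℕ} {m : Fin N → Type*}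
    [∀ k, Fintype (m k)] [∀ k, DecidableEq (m k)]
    (ϱ : Matrix (∀ k, m k) (∀ k, m k) ℂ) (hϱ : IsDensity ϱ) :
    IsSeparableN ϱ ↔ gammaNormN ϱ = 1 := by
  constructor
  · exact gammaNormN_of_separable ϱ hϱ
  · exact separableN_of_gammaNormN ϱ hϱ
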